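/- If F = (W, ≤) is a 2-roach that is not a 1-roach, then F has a unique splitting point of depth 2. -/

import Mathlib

/-- `m` is a maximal point: `↑m = {m}`. -/
def IsMaxPt {W : Type*} (le : W → W → Prop) (m : W) : Prop :=
  ∀ x, le m x → x = m

/-- The depth of `w` is at most `n`: every strictly ascending chain (each step goes up and
not back down, i.e. moves to a strictly higher cluster) starting at `w` has length at most
`n`. -/
def DepthLE {W : Type*} (le : W → W → Prop) (w : W) (n : ℕ) : Prop :=
  ∀ l : List W, l.head? = some w → l.Chain' (fun a b => le a b ∧ ¬ le b a) → l.length ≤ n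

/-- `s` is a splitting point witnessing the `n`-roach condition: `s` has depth at most `n`,
the up-set `↑s` is partially ordered (the restriction of `le` is antisymmetric on it), and
for every `w` there is `t_w ∈ ↑s` with `↑w ∩ ↑s = ↑t_w`. -/
def IsSplittingPoint {W : Type*} (le : W → W → Prop) (n : ℕ) (s : W) : Prop :=
  DepthLE le s n ∧
  (∀ a b, le s a → le s b → le a b → le b a → a = b) ∧
  (∀ w, ∃ t, le s t ∧ ∀ x, (le w x ∧ le s x) ↔ le t x)

/-- An `n`-roach: a frame possessing a splitting point of depth at most `n`. -/
def IsNRoach {W : Type*} (le : W → W → Prop) (n : ℕ) : Prop :=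
  ∃ s, IsSplittingPoint le n s

/-- A 2-roach that is not a 1-roach has a unique splitting point of depth 2. -/
theorem stmt_14 {W : Type*} [Fintype W] (le : W → W → Prop)
    (hrefl : ∀ w, le w w)
    (htrans : ∀ a b c, le a b → le b c → le a c)
    (hroot : ∃ r, ∀ w, le r w)
    (hs41 : ∀ w, ∃ m, le w m ∧ IsMaxPt le m)
    (h2 : IsNRoach le 2) (h1 : ¬ IsNRoach le 1) :
    ∃! s, IsSplittingPoint le 2 s ∧ ¬ DepthLE le s 1 := by
  obtain ⟨s, hs⟩ := h2
  -- maximal points have depth ≤ 1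
  have hmax_depth : ∀ m, IsMaxPt le m → DepthLE le m 1 := by
    intro m hm l hl hc
    match l with
    | [] => simp
    | [a] => simp
    | a :: b :: rest =>
      simp only [List.head?_cons, Option.some.injEq] at hl
      subst hl
      replace hc := List.isChain_cons_cons.mp hc
      obtain ⟨⟨hab, hba⟩, -⟩ := hc
      rw [hm b hab] at hba
      exact absurd (hrefl a) hba
  -- every maximal point is above any splitting point
  have hspl_max : ∀ s', IsSplittingPoint le 2 s' → ∀ m, IsMaxPt le m → le s' m := by
    intro s' hs' m hm
    obtain ⟨t, h1t, h2t⟩ := hs'.2.2 m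
    have h3 := (h2t t).mpr (hrefl t)
    have : t = m := hm t h3.1
    rwa [this] at h1t
  -- any point above a splitting point of depth 2 is that point or maximal
  have hup : ∀ s', IsSplittingPoint le 2 s' → ∀ x, le s' x → x = s' ∨ IsMaxPt le x := by
    intro s' hs' x hsx
    by_cases hxs : le x s'
    · exact Or.inl (hs'.2.1 x s' hsx (hrefl s') hxs hsx)
    · right
      intro y hxy
      by_contra hne
      have hyx : ¬ le y x := by
        intro hyx
        exact hne (hs'.2.1 y x (htrans _ _ _ hsx hxy) hsx hyx hxy)
      have hchain : List.Chain' (fun a b => le a b ∧ ¬ le b a) [s', x, y] :=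
        List.isChain_cons_cons.mpr ⟨⟨hsx, hxs⟩,
          List.isChain_cons_cons.mpr ⟨⟨hxy, hyx⟩, List.isChain_singleton _⟩⟩
      have := hs'.1 [s', x, y] rfl hchain
      simp at this
  -- a maximal point seen by everyone is a splitting point of depth 1
  have hmax_spl : ∀ t, IsMaxPt le t → (∀ w, le w t) → IsSplittingPoint le 1 t := by
    intro t ht hall
    refine ⟨hmax_depth t ht, ?_, ?_⟩
    · intro a b hta htb _ _
      rw [ht a hta, ht b htb]
    · intro w
      refine ⟨t, hrefl t, fun x => ⟨fun h => h.2, fun h => ?_⟩⟩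
      rw [ht x h]
      exact ⟨hall w, hrefl t⟩
  have hnd : ¬ DepthLE le s 1 := fun hd => h1 ⟨s, hd, hs.2.1, hs.2.2⟩
  refine ⟨s, ⟨hs, hnd⟩, ?_⟩
  rintro y ⟨hy, -⟩
  obtain ⟨t, hst, ht⟩ := hs.2.2 y
  have hts := (ht t).mpr (hrefl t)
  rcases hup s hs t hst with rfl | htmax
  · -- t = s, so le y s
    rcases hup y hy t hts.1 with h | hmax
    · exact h.symm ▸ rfl
    · exact absurd (hmax_depth t hmax) hnd
  · -- t is maximal and everyone sees it: contradiction with ¬ 1-roach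
    exfalso
    apply h1
    refine ⟨t, hmax_spl t htmax ?_⟩
    intro w
    obtain ⟨m, hwm, hm⟩ := hs41 w
    have h1m : le s m := hspl_max s hs m hm
    have h2m : le y m := hspl_max y hy m hm
    have htm : le t m := (ht m).mp ⟨h2m, h1m⟩
    rwa [htmax m htm] at hwm
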